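/- (Corollary 1: instability of long converter chains.) Fix reals D ∈ (0,1], L > 0, C > 0, P > 0, V̄ > 0 and a feedback gain f = (f₁, f₂) ∈ ℝ² such that the standalone closed-loop matrix M = [[V̄·f₁/L, −1/L + V̄·f₂/L], [1/C, P/(C·V̄²)]] is Hurwitz. For n ≥ 1 and R > 0 define the real 2n×2n matrix Ã_n(R) for the line network of n identical converters, with state (i₁, v₁, …, i_n, v_n), given entrywise by: the (2k−1)-th row has entry −(D·R/L)·min(k, m) in column 2m−1 for every m = 1,…,n, plus V̄·f₁/L added at column 2k−1 and the entry −1/L + V̄·f₂/L at column 2k, and zeros in all other columns; the (2k)-th row has entry 1/C at column 2k−1, entry P/(C·V̄²) at column 2k, and zeros elsewhere. Then for every R > 0 there exists N₀ such that for all n > N₀ the matrix Ã_n(R) is not Hurwitz, i.e., it has a complex eigenvalue with nonnegative real part. -/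

import Mathlib

open Matrix Finset

/-! ### Auxiliary definitions and lemmas -/

/-- Entry function of the chain matrix, as a function of natural-number indices. -/
noncomputable def Aent (D L C P Vbar f₁ f₂ R : ℝ) (r c : ℕ) : ℝ :=
  if r % 2 = 0 then
    if c % 2 = 0 then
      -(D * R / L) * ((min (r / 2 + 1) (c / 2 + 1) : ℕ) : ℝ)
        + (if c = r then Vbar * f₁ / L else 0)
    else if c = r + 1 then -(1 / L) + Vbar * f₂ / L
    else 0
  else
    if c + 1 = r then 1 / C
    else if c = r then P / (C * Vbar ^ 2)
    else 0

lemma Aent_ee (D L C P Vbar f₁ f₂ R : ℝ) (k i : ℕ) :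
    Aent D L C P Vbar f₁ f₂ R (2 * k) (2 * i)
      = -(D * R / L) * ((min (k + 1) (i + 1) : ℕ) : ℝ)
        + (if i = k then Vbar * f₁ / L else 0) := by
  have h1 : 2 * k % 2 = 0 := by omega
  have h2 : 2 * i % 2 = 0 := by omega
  have h3 : 2 * k / 2 = k := by omega
  have h4 : 2 * i / 2 = i := by omega
  have h5 : (2 * i = 2 * k) ↔ (i = k) := by omega
  simp [Aent, h1, h2, h3, h4, h5]

lemma Aent_eo (D L C P Vbar f₁ f₂ R : ℝ) (k i : ℕ) :
    Aent D L C P Vbar f₁ f₂ R (2 * k) (2 * i + 1)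
      = if i = k then -(1 / L) + Vbar * f₂ / L else 0 := by
  have h1 : 2 * k % 2 = 0 := by omega
  have h2 : ¬ ((2 * i + 1) % 2 = 0) := by omega
  have h5 : (2 * i + 1 = 2 * k + 1) ↔ (i = k) := by omega
  simp [Aent, h1, h2, h5]

lemma Aent_oe (D L C P Vbar f₁ f₂ R : ℝ) (k i : ℕ) :
    Aent D L C P Vbar f₁ f₂ R (2 * k + 1) (2 * i)
      = if i = k then 1 / C else 0 := by
  have h1 : ¬ ((2 * k + 1) % 2 = 0) := by omega
  have h5 : (2 * i + 1 = 2 * k + 1) ↔ (i = k) := by omega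
  have h6 : ¬ (2 * i = 2 * k + 1) := by omega
  simp [Aent, h1, h5, h6]

lemma Aent_oo (D L C P Vbar f₁ f₂ R : ℝ) (k i : ℕ) :
    Aent D L C P Vbar f₁ f₂ R (2 * k + 1) (2 * i + 1)
      = if i = k then P / (C * Vbar ^ 2) else 0 := by
  have h1 : ¬ ((2 * k + 1) % 2 = 0) := by omega
  have h5 : ¬ (2 * i + 1 + 1 = 2 * k + 1) := by omega
  have h6 : (2 * i + 1 = 2 * k + 1) ↔ (i = k) := by omega
  have h7 : ¬ (2 * i + 1 = 2 * k) := by omega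
  simp [Aent, h1, h5, h6, h7]

/-- The symmetric "min" matrix with entries `min (k+1) (m+1)`. -/
noncomputable def minMat (n : ℕ) : Matrix (Fin n) (Fin n) ℝ :=
  Matrix.of fun k m => ((min (k.val + 1) (m.val + 1) : ℕ) : ℝ)

lemma minMat_isHermitian (n : ℕ) : (minMat n).IsHermitian := by
  ext i j
  simp [Matrix.IsHermitian, Matrix.conjTranspose_apply, minMat, min_comm]

lemma gauss (n : ℕ) : ∑ i ∈ Finset.range n, ((i : ℝ) + 1) = n * (n + 1) / 2 := by
  induction n with
  | zero => simp
  | succ n ih => rw [Finset.sum_range_succ, ih]; push_cast; ring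

lemma minMat_trace (n : ℕ) : (minMat n).trace = n * (n + 1) / 2 := by
  rw [Matrix.trace]
  have h : ∀ i : Fin n, (minMat n).diag i = ((i : ℝ) + 1) := by
    intro i; simp [minMat, Matrix.diag]
  rw [Finset.sum_congr rfl fun i _ => h i]
  rw [Fin.sum_univ_eq_sum_range (fun t => ((t : ℝ) + 1)) n, gauss]

lemma trace_eq_sum_eig (n : ℕ) :
    (minMat n).trace = ∑ i, (minMat_isHermitian n).eigenvalues i := by
  have hH := minMat_isHermitian n
  conv_lhs => rw [hH.spectral_theorem]
  rw [Unitary.conjStarAlgAut_apply, Matrix.trace_mul_cycle, Matrix.mem_unitaryGroup_iff'.mp (hH.eigenvectorUnitary).2,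
    one_mul, Matrix.trace_diagonal]
  simp

lemma mem_spectrum_of_eig {N : ℕ} (M : Matrix (Fin N) (Fin N) ℝ) (t : ℝ)
    (u : Fin N → ℝ) (hu : u ≠ 0) (h : M *ᵥ u = t • u) :
    (t : ℂ) ∈ spectrum ℂ (M.map Complex.ofReal) := by
  rw [spectrum.mem_iff]
  intro hunit
  set w : Fin N → ℂ := fun i => (u i : ℂ) with hwdef
  have hw0 : w ≠ 0 := by
    intro h0
    apply hu
    funext i
    have := congrFun h0 i
    simpa [hwdef] using this
  have hmv : (algebraMap ℂ (Matrix (Fin N) (Fin N) ℂ) (t : ℂ) - M.map Complex.ofReal) *ᵥ w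
      = 0 := by
    funext j
    have h1 : (M.map Complex.ofReal *ᵥ w) j = (((M *ᵥ u) j : ℝ) : ℂ) :=
      (RingHom.map_mulVec Complex.ofRealHom M u j).symm
    have h2 : ((M *ᵥ u) j : ℝ) = t * u j := by rw [h]; simp
    simp [Matrix.sub_mulVec, Algebra.algebraMap_eq_smul_one, Matrix.smul_mulVec,
      Matrix.one_mulVec, h1, h2, hwdef]
    rw [← hwdef, h1, h2]; push_cast; ring
  have hinj : Function.Injective
      ((algebraMap ℂ (Matrix (Fin N) (Fin N) ℂ) (t : ℂ) - M.map Complex.ofReal).mulVec) :=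
    Matrix.mulVec_injective_iff_isUnit.mpr hunit
  exact hw0 (hinj (a₁ := w) (a₂ := 0) (by rw [hmv, Matrix.mulVec_zero]))

lemma exists_pos_root (T Δ : ℝ) (hΔ : Δ < 0) :
    ∃ lam : ℝ, 0 < lam ∧ lam ^ 2 - T * lam + Δ = 0 := by
  have h4 : 0 ≤ T ^ 2 - 4 * Δ := by nlinarith [sq_nonneg T]
  have hs : Real.sqrt (T ^ 2 - 4 * Δ) ^ 2 = T ^ 2 - 4 * Δ := Real.sq_sqrt h4
  refine ⟨(T + Real.sqrt (T ^ 2 - 4 * Δ)) / 2, ?_, by linear_combination hs / 4⟩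
  have habs : |T| < Real.sqrt (T ^ 2 - 4 * Δ) := by
    have h1 : Real.sqrt (T ^ 2) < Real.sqrt (T ^ 2 - 4 * Δ) :=
      Real.sqrt_lt_sqrt (sq_nonneg T) (by linarith)
    rwa [Real.sqrt_sq_eq_abs] at h1
  have := neg_abs_le T
  linarith

lemma sum_range_two_mul' (f : ℕ → ℝ) (n : ℕ) :
    ∑ t ∈ Finset.range (2 * n), f t
      = ∑ i ∈ Finset.range n, (f (2 * i) + f (2 * i + 1)) := by
  induction n with
  | zero => simp
  | succ n ih =>
      rw [show 2 * (n + 1) = 2 * n + 1 + 1 from by ring, Finset.sum_range_succ,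
        Finset.sum_range_succ, ih, Finset.sum_range_succ]
      ring



/-- A real square matrix is Hurwitz if every complex eigenvalue has strictly
negative real part. -/
def Matrix.IsHurwitz {n : Type*} [Fintype n] [DecidableEq n]
    (M : Matrix n n ℝ) : Prop :=
  ∀ μ ∈ spectrum ℂ (M.map Complex.ofReal), μ.re < 0

/-- The closed-loop matrix `Ã_n(R)` of a line network of `n` identical buck
converters with constant power loads, each using the same individual state
feedback `f = (f₁, f₂)`, in the state order `(i₁, v₁, …, i_n, v_n)`
(0-indexed: row `2(k−1)` is the inductor-current row of converter `k`, row
`2k−1` is its capacitor-voltage row). The current row of converter `k` has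
entry `−(D·R/L)·min(k, m)` in the current column of every converter `m`, plus
`V̄·f₁/L` on its own current column and `−1/L + V̄·f₂/L` on its own voltage
column; the voltage row of converter `k` has entries `1/C` and `P/(C·V̄²)` on
converter `k`'s current and voltage columns respectively. -/
noncomputable def chainMatrix (D L C P Vbar f₁ f₂ : ℝ) (n : ℕ) (R : ℝ) :
    Matrix (Fin (2 * n)) (Fin (2 * n)) ℝ :=
  Matrix.of fun r c =>
    if r.val % 2 = 0 then
      -- inductor-current row of converter k = r/2 + 1
      if c.val % 2 = 0 then
        -(D * R / L) * ((min (r.val / 2 + 1) (c.val / 2 + 1) : ℕ) : ℝ)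
          + (if c.val = r.val then Vbar * f₁ / L else 0)
      else if c.val = r.val + 1 then -(1 / L) + Vbar * f₂ / L
      else 0
    else
      -- capacitor-voltage row of converter k = (r+1)/2
      if c.val + 1 = r.val then 1 / C
      else if c.val = r.val then P / (C * Vbar ^ 2)
      else 0

/-- Corollary 1 (instability of long converter chains): for any fixed
individually stabilizing feedback gain and any line resistance `R > 0`, all
sufficiently long chains of identical converters are not Hurwitz. -/
theorem long_converter_chain_unstable
    (D L C P Vbar f₁ f₂ : ℝ) (hD : 0 < D ∧ D ≤ 1) (hL : 0 < L) (hC : 0 < C)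
    (hP : 0 < P) (hV : 0 < Vbar)
    (hstable : Matrix.IsHurwitz
      !![Vbar * f₁ / L, -(1 / L) + Vbar * f₂ / L;
         1 / C, P / (C * Vbar ^ 2)]) :
    ∀ R > (0 : ℝ), ∃ N₀ : ℕ, ∀ n > N₀,
      ¬ (chainMatrix D L C P Vbar f₁ f₂ n R).IsHurwitz ∧
        ∃ μ ∈ spectrum ℂ ((chainMatrix D L C P Vbar f₁ f₂ n R).map
          Complex.ofReal), 0 ≤ μ.re := by
  intro R hR
  obtain ⟨hD0, _⟩ := hD
  have hrd : 0 < (D * R / L) * (P / (C * Vbar ^ 2)) := by positivity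
  obtain ⟨N₀, hN₀⟩ := exists_nat_gt
    (2 * ((Vbar * f₁ / L) * (P / (C * Vbar ^ 2)) - (-(1 / L) + Vbar * f₂ / L) * (1 / C)) /
      ((D * R / L) * (P / (C * Vbar ^ 2))))
  refine ⟨N₀, fun n hn => ?_⟩
  have hn0 : 0 < n := lt_of_le_of_lt (Nat.zero_le N₀) hn
  haveI : NeZero n := ⟨hn0.ne'⟩
  have hH := minMat_isHermitian n
  -- there is a large eigenvalue of the min-matrix
  have hpig : ∃ i : Fin n, ((n : ℝ) + 1) / 2 ≤ hH.eigenvalues i := by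
    by_contra hcon
    push_neg at hcon
    have h2 : ∑ i, hH.eigenvalues i < ∑ _i : Fin n, ((n : ℝ) + 1) / 2 :=
      Finset.sum_lt_sum_of_nonempty Finset.univ_nonempty (fun i _ => hcon i)
    rw [← trace_eq_sum_eig, minMat_trace, Finset.sum_const, Finset.card_univ,
      Fintype.card_fin, nsmul_eq_mul] at h2
    nlinarith
  obtain ⟨iv, hiv⟩ := hpig
  set μ := hH.eigenvalues iv with hμdef
  set v : Fin n → ℝ := ⇑(hH.eigenvectorBasis iv) with hvdef
  have hv : minMat n *ᵥ v = μ • v := hH.mulVec_eigenvectorBasis iv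
  have hvne : v ≠ 0 := by
    intro h0
    apply hH.eigenvectorBasis.orthonormal.ne_zero iv
    ext j
    exact congrFun h0 j
  obtain ⟨j0, hj0⟩ : ∃ j, v j ≠ 0 := Function.ne_iff.mp hvne
  have hμpos : 0 < μ := lt_of_lt_of_le (by positivity) hiv
  -- Δ < 0 for large n
  have hΔ : ((Vbar * f₁ / L) - (D * R / L) * μ) * (P / (C * Vbar ^ 2))
      - (-(1 / L) + Vbar * f₂ / L) * (1 / C) < 0 := by
    have hcast : (N₀ : ℝ) + 1 ≤ (n : ℝ) := by exact_mod_cast hn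
    have h2K : 2 * ((Vbar * f₁ / L) * (P / (C * Vbar ^ 2))
          - (-(1 / L) + Vbar * f₂ / L) * (1 / C))
        < (N₀ : ℝ) * ((D * R / L) * (P / (C * Vbar ^ 2))) := by
      rwa [div_lt_iff₀ hrd] at hN₀
    nlinarith [mul_le_mul_of_nonneg_left hiv hrd.le,
      mul_le_mul_of_nonneg_left hcast hrd.le]
  obtain ⟨lam, hlam, hquad⟩ := exists_pos_root
    ((Vbar * f₁ / L) + (P / (C * Vbar ^ 2)) - (D * R / L) * μ)
    (((Vbar * f₁ / L) - (D * R / L) * μ) * (P / (C * Vbar ^ 2))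
      - (-(1 / L) + Vbar * f₂ / L) * (1 / C)) hΔ
  -- the eigenvector of the chain matrix
  set vv : ℕ → ℝ := fun t => if h : t < n then v ⟨t, h⟩ else 0 with hvvdef
  set uu : ℕ → ℝ := fun t =>
    if t % 2 = 0 then (lam - P / (C * Vbar ^ 2)) * vv (t / 2)
    else (1 / C) * vv (t / 2) with huudef
  set u : Fin (2 * n) → ℝ := fun c => uu c.val with hudef
  have huue : ∀ t : ℕ, uu (2 * t) = (lam - P / (C * Vbar ^ 2)) * vv t := by
    intro t
    have h1 : 2 * t % 2 = 0 := by omega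
    have h2 : 2 * t / 2 = t := by omega
    simp [huudef, h1, h2]
  have huuo : ∀ t : ℕ, uu (2 * t + 1) = (1 / C) * vv t := by
    intro t
    have h1 : ¬ ((2 * t + 1) % 2 = 0) := by omega
    have h2 : (2 * t + 1) / 2 = t := by omega
    simp [huudef, h1, h2]
  have hvvk : ∀ m : Fin n, vv m.val = v m := by
    intro m; simp [hvvdef, m.isLt]
  have hune : u ≠ 0 := by
    intro h0
    apply hj0
    have h1 : 2 * j0.val + 1 < 2 * n := by omega
    have h2 := congrFun h0 ⟨2 * j0.val + 1, h1⟩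
    rw [hudef] at h2
    simp only [huuo j0.val, hvvk ⟨j0.val, j0.isLt⟩, Fin.eta, Pi.zero_apply] at h2
    rcases mul_eq_zero.mp h2 with h | h
    · exact absurd h (one_div_ne_zero hC.ne')
    · exact h
  -- main eigenvector equation
  have key : chainMatrix D L C P Vbar f₁ f₂ n R *ᵥ u = lam • u := by
    funext c
    have hck : c.val / 2 < n := by have := c.isLt; omega
    set k := c.val / 2 with hkdef
    have hsplit : c.val = 2 * k ∨ c.val = 2 * k + 1 := by omega
    have hS : ∑ i ∈ Finset.range n, ((min (k + 1) (i + 1) : ℕ) : ℝ) * vv i = μ * vv k := by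
      have h1 := Fin.sum_univ_eq_sum_range
        (fun t => ((min (k + 1) (t + 1) : ℕ) : ℝ) * vv t) n
      rw [← h1]
      have h2 : ∀ m : Fin n, ((min (k + 1) (m.val + 1) : ℕ) : ℝ) * vv m.val
          = minMat n ⟨k, hck⟩ m * v m := by
        intro m; rw [hvvk]; rfl
      rw [Finset.sum_congr rfl fun m _ => h2 m]
      have h3 : ∑ m : Fin n, minMat n ⟨k, hck⟩ m * v m = (minMat n *ᵥ v) ⟨k, hck⟩ := rfl
      rw [h3, hv]
      have h4 : vv k = v ⟨k, hck⟩ := by simp [hvvdef, hck]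
      rw [h4]
      rfl
    have hlhs : (chainMatrix D L C P Vbar f₁ f₂ n R *ᵥ u) c
        = ∑ t ∈ Finset.range (2 * n), Aent D L C P Vbar f₁ f₂ R c.val t * uu t :=
      Fin.sum_univ_eq_sum_range (fun t => Aent D L C P Vbar f₁ f₂ R c.val t * uu t) (2 * n)
    have hrhs : (lam • u) c = lam * uu c.val := rfl
    rw [hlhs, hrhs, sum_range_two_mul']
    rcases hsplit with hc | hc
    · -- inductor-current row
      have hpair : ∀ i ∈ Finset.range n,
          (Aent D L C P Vbar f₁ f₂ R c.val (2 * i) * uu (2 * i)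
            + Aent D L C P Vbar f₁ f₂ R c.val (2 * i + 1) * uu (2 * i + 1))
          = -(D * R / L) * (lam - P / (C * Vbar ^ 2))
              * (((min (k + 1) (i + 1) : ℕ) : ℝ) * vv i)
            + (if i = k then
                ((Vbar * f₁ / L) * (lam - P / (C * Vbar ^ 2))
                  + (-(1 / L) + Vbar * f₂ / L) * (1 / C)) * vv i
              else 0) := by
        intro i _
        rw [hc, Aent_ee, Aent_eo, huue, huuo]
        rcases eq_or_ne i k with h | h
        · simp [h]; try ring
        · simp [h]; try ring
      rw [Finset.sum_congr rfl hpair, Finset.sum_add_distrib,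
        Finset.sum_ite_eq' (Finset.range n) k
          (fun i => ((Vbar * f₁ / L) * (lam - P / (C * Vbar ^ 2))
            + (-(1 / L) + Vbar * f₂ / L) * (1 / C)) * vv i),
        if_pos (Finset.mem_range.mpr hck), ← Finset.mul_sum, hS, hc, huue]
      linear_combination (-(vv k)) * hquad
    · -- capacitor-voltage row
      have hpair : ∀ i ∈ Finset.range n,
          (Aent D L C P Vbar f₁ f₂ R c.val (2 * i) * uu (2 * i)
            + Aent D L C P Vbar f₁ f₂ R c.val (2 * i + 1) * uu (2 * i + 1))
          = (if i = k then
              ((1 / C) * (lam - P / (C * Vbar ^ 2))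
                + (P / (C * Vbar ^ 2)) * (1 / C)) * vv i
            else 0) := by
        intro i _
        rw [hc, Aent_oe, Aent_oo, huue, huuo]
        rcases eq_or_ne i k with h | h
        · simp [h]; try ring
        · simp [h]; try ring
      rw [Finset.sum_congr rfl hpair,
        Finset.sum_ite_eq' (Finset.range n) k
          (fun i => ((1 / C) * (lam - P / (C * Vbar ^ 2))
            + (P / (C * Vbar ^ 2)) * (1 / C)) * vv i),
        if_pos (Finset.mem_range.mpr hck), hc, huuo]
      ring
  have hmem : ((lam : ℝ) : ℂ) ∈ spectrum ℂ
      ((chainMatrix D L C P Vbar f₁ f₂ n R).map Complex.ofReal) :=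
    mem_spectrum_of_eig _ lam u hune key
  refine ⟨fun hHur => ?_, ⟨(lam : ℂ), hmem, by simpa using hlam.le⟩⟩
  have h := hHur _ hmem
  rw [Complex.ofReal_re] at h
  linarith
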